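/- Let Σ be symmetric with eigenvalues λ₁* > ⋯ > λ_d* > 0, λ₁* = 1. Define Σ_k via inexact deflation with unit vectors v_k = u_k + δ_k, where u_k is a top unit eigenvector of Σ_k, and Σ_k* via ideal deflation. If ‖δ_k‖₂ ≤ 1/6, then ‖Σ_{k+1} − Σ_{k+1}*‖_F ≤ 3‖Σ_k − Σ_k*‖_F + 5 λ_k* ‖δ_k‖₂ + 2 λ_k* ‖u_k − u_k*‖₂. -/

import Mathlib

open Matrix Finset

/-- Euclidean norm of a vector in `Fin d → ℝ`. -/
noncomputable def vnorm {d : ℕ} (x : Fin d → ℝ) : ℝ := Real.sqrt (∑ i, x i ^ 2)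

/-- Frobenius norm of a real matrix. -/
noncomputable def fnorm {d : ℕ} (A : Matrix (Fin d) (Fin d) ℝ) : ℝ :=
  Real.sqrt (∑ i, ∑ j, A i j ^ 2)

lemma vnorm_eq {d : ℕ} (x : Fin d → ℝ) :
    vnorm x = ‖(WithLp.equiv 2 (Fin d → ℝ)).symm x‖ := by
  rw [EuclideanSpace.norm_eq]
  simp [vnorm, Real.norm_eq_abs, sq_abs]

lemma fnorm_eq {d : ℕ} (A : Matrix (Fin d) (Fin d) ℝ) :
    fnorm A = ‖(WithLp.equiv 2 (Fin d × Fin d → ℝ)).symm (fun p => A p.1 p.2)‖ := by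
  rw [EuclideanSpace.norm_eq]
  simp [fnorm, Real.norm_eq_abs, sq_abs, Fintype.sum_prod_type]
lemma vnorm_nonneg {d : ℕ} (x : Fin d → ℝ) : 0 ≤ vnorm x := Real.sqrt_nonneg _
lemma fnorm_nonneg {d : ℕ} (A : Matrix (Fin d) (Fin d) ℝ) : 0 ≤ fnorm A := Real.sqrt_nonneg _

lemma vnorm_sq {d : ℕ} (x : Fin d → ℝ) : vnorm x ^ 2 = ∑ i, x i ^ 2 := by
  rw [vnorm, Real.sq_sqrt (Finset.sum_nonneg fun i _ => sq_nonneg _)]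

lemma dot_self_eq {d : ℕ} (x : Fin d → ℝ) : x ⬝ᵥ x = vnorm x ^ 2 := by
  rw [vnorm_sq]; simp [dotProduct, sq]

lemma vnorm_sub_triangle {d : ℕ} (x y : Fin d → ℝ) : vnorm (x + y) ≤ vnorm x + vnorm y := by
  simp only [vnorm_eq]
  rw [show (WithLp.equiv 2 (Fin d → ℝ)).symm (x + y)
      = (WithLp.equiv 2 (Fin d → ℝ)).symm x + (WithLp.equiv 2 (Fin d → ℝ)).symm y from rfl]
  exact norm_add_le _ _

lemma fnorm_triangle {d : ℕ} (A B : Matrix (Fin d) (Fin d) ℝ) :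
    fnorm (A + B) ≤ fnorm A + fnorm B := by
  simp only [fnorm_eq]
  rw [show (WithLp.equiv 2 (Fin d × Fin d → ℝ)).symm (fun p => (A + B) p.1 p.2)
      = (WithLp.equiv 2 (Fin d × Fin d → ℝ)).symm (fun p => A p.1 p.2)
        + (WithLp.equiv 2 (Fin d × Fin d → ℝ)).symm (fun p => B p.1 p.2) from rfl]
  exact norm_add_le _ _

lemma fnorm_smul {d : ℕ} (c : ℝ) (A : Matrix (Fin d) (Fin d) ℝ) :
    fnorm (c • A) = |c| * fnorm A := by
  simp only [fnorm_eq]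
  rw [show (WithLp.equiv 2 (Fin d × Fin d → ℝ)).symm (fun p => (c • A) p.1 p.2)
      = c • (WithLp.equiv 2 (Fin d × Fin d → ℝ)).symm (fun p => A p.1 p.2) from rfl]
  rw [norm_smul, Real.norm_eq_abs]

lemma fnorm_neg {d : ℕ} (A : Matrix (Fin d) (Fin d) ℝ) : fnorm (-A) = fnorm A := by
  simpa using fnorm_smul (-1) A

lemma abs_dot_le {d : ℕ} (x y : Fin d → ℝ) : |x ⬝ᵥ y| ≤ vnorm x * vnorm y := by
  have := abs_real_inner_le_norm ((WithLp.equiv 2 (Fin d → ℝ)).symm x)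
    ((WithLp.equiv 2 (Fin d → ℝ)).symm y)
  rw [← vnorm_eq, ← vnorm_eq] at this
  simpa [real_inner_comm, EuclideanSpace.inner_eq_star_dotProduct, dotProduct, mul_comm] using this
lemma vnorm_mulVec_le {d : ℕ} (M : Matrix (Fin d) (Fin d) ℝ) (y : Fin d → ℝ) :
    vnorm (M.mulVec y) ≤ fnorm M * vnorm y := by
  have h1 : vnorm (M.mulVec y) ^ 2 ≤ (fnorm M * vnorm y) ^ 2 := by
    rw [vnorm_sq, mul_pow, fnorm, Real.sq_sqrt (by positivity)]
    rw [Finset.sum_mul]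
    apply Finset.sum_le_sum
    intro i _
    have := abs_dot_le (M i) y
    have h2 : (M.mulVec y) i = M i ⬝ᵥ y := rfl
    calc M.mulVec y i ^ 2 = |M i ⬝ᵥ y| ^ 2 := by rw [h2, sq_abs]
    _ ≤ (vnorm (M i) * vnorm y) ^ 2 := by
        apply pow_le_pow_left₀ (abs_nonneg _) this
    _ = (∑ j, M i j ^ 2) * vnorm y ^ 2 := by rw [mul_pow, vnorm_sq]
  exact (pow_le_pow_iff_left₀ (vnorm_nonneg _) (mul_nonneg (fnorm_nonneg _) (vnorm_nonneg _)) two_ne_zero).mp h1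

lemma abs_quad_le {d : ℕ} (M : Matrix (Fin d) (Fin d) ℝ) (x y : Fin d → ℝ) :
    |x ⬝ᵥ M.mulVec y| ≤ vnorm x * vnorm y * fnorm M := by
  calc |x ⬝ᵥ M.mulVec y| ≤ vnorm x * vnorm (M.mulVec y) := abs_dot_le _ _
  _ ≤ vnorm x * (fnorm M * vnorm y) := by
      apply mul_le_mul_of_nonneg_left (vnorm_mulVec_le _ _) (vnorm_nonneg _)
  _ = vnorm x * vnorm y * fnorm M := by ring

lemma fnorm_vecMulVec {d : ℕ} (a b : Fin d → ℝ) :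
    fnorm (vecMulVec a b) = vnorm a * vnorm b := by
  rw [fnorm, vnorm, vnorm, ← Real.sqrt_mul (by positivity), Finset.sum_mul_sum]
  congr 1
  apply Finset.sum_congr rfl; intro i _
  apply Finset.sum_congr rfl; intro j _
  simp [vecMulVec_apply, mul_pow]
lemma deflate_eq {d : ℕ} (a : Fin d → ℝ) (M : Matrix (Fin d) (Fin d) ℝ) :
    vecMulVec a a * M * vecMulVec a a = (a ⬝ᵥ M.mulVec a) • vecMulVec a a := by
  ext i j
  simp only [Matrix.mul_apply, vecMulVec_apply, Matrix.smul_apply, dotProduct, mulVec,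
    smul_eq_mul, Finset.sum_mul, Finset.mul_sum]
  rw [Finset.sum_comm]
  apply Finset.sum_congr rfl; intro x _
  apply Finset.sum_congr rfl; intro y _
  ring
lemma mul_vecMulVec {d : ℕ} (M : Matrix (Fin d) (Fin d) ℝ) (a b : Fin d → ℝ) :
    M * vecMulVec a b = vecMulVec (M.mulVec a) b := by
  ext i j
  simp [Matrix.mul_apply, vecMulVec_apply, mulVec, dotProduct, Finset.sum_mul, mul_assoc]

lemma vecMulVec_mulVec {d : ℕ} (a b x : Fin d → ℝ) :
    (vecMulVec a b).mulVec x = (b ⬝ᵥ x) • a := by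
  ext i
  simp only [vecMulVec_apply, mulVec, dotProduct, Pi.smul_apply, smul_eq_mul, Finset.sum_mul]
  apply Finset.sum_congr rfl; intro j _; ring

lemma smul_vecMulVec {d : ℕ} (c : ℝ) (a b : Fin d → ℝ) :
    vecMulVec (c • a) b = c • vecMulVec a b := by
  ext i j; simp [vecMulVec_apply, mul_assoc]

lemma transpose_vecMulVec {d : ℕ} (a b : Fin d → ℝ) :
    (vecMulVec a b)ᵀ = vecMulVec b a := by
  ext i j; simp [vecMulVec_apply, mul_comm]
lemma complete_lemma {d : ℕ} (ustar : ℕ → Fin d → ℝ)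
    (hortho : ∀ i j, i < d → j < d → ustar i ⬝ᵥ ustar j = if i = j then 1 else 0) :
    ∑ j ∈ Finset.range d, vecMulVec (ustar j) (ustar j) = (1 : Matrix (Fin d) (Fin d) ℝ) := by
  set U : Matrix (Fin d) (Fin d) ℝ := Matrix.of (fun j i => ustar (j:ℕ) i) with hU
  have h1 : U * Uᵀ = 1 := by
    ext j j'
    have h := hortho j j' j.isLt j'.isLt
    simp only [Matrix.mul_apply, Matrix.transpose_apply, Matrix.one_apply, hU, Matrix.of_apply]
    rw [show ∑ i, ustar (j:ℕ) i * ustar (j':ℕ) i = ustar (j:ℕ) ⬝ᵥ ustar (j':ℕ) from rfl, h]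
    simp [Fin.val_inj]
  have h2 : Uᵀ * U = 1 := mul_eq_one_comm.mp h1
  ext i i'
  have h3 := congrFun (congrFun h2 i) i'
  simp only [Matrix.mul_apply, Matrix.transpose_apply, hU, Matrix.of_apply] at h3
  rw [Matrix.sum_apply]
  rw [← Fin.sum_univ_eq_sum_range (fun j => vecMulVec (ustar j) (ustar j) i i') d]
  simpa [vecMulVec_apply] using h3
lemma sum_mulVec' {d : ℕ} {s : Finset ℕ} (A : ℕ → Matrix (Fin d) (Fin d) ℝ) (x : Fin d → ℝ) :
    (∑ j ∈ s, A j).mulVec x = ∑ j ∈ s, (A j).mulVec x := by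
  ext i
  simp only [mulVec, dotProduct, Matrix.sum_apply, Finset.sum_apply, Finset.sum_mul]
  rw [Finset.sum_comm]

lemma dot_sum' {d : ℕ} {s : Finset ℕ} (x : Fin d → ℝ) (y : ℕ → Fin d → ℝ) :
    x ⬝ᵥ (∑ j ∈ s, y j) = ∑ j ∈ s, x ⬝ᵥ y j := by
  simp only [dotProduct, Finset.sum_apply, Finset.mul_sum]
  rw [Finset.sum_comm]
lemma vmv_diff {d : ℕ} (x y : Fin d → ℝ) :
    vecMulVec x x - vecMulVec y y = vecMulVec x (x - y) + vecMulVec (x - y) y := by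
  ext i j; simp only [Matrix.sub_apply, Matrix.add_apply, vecMulVec_apply, Pi.sub_apply]; ring

lemma fnorm_vmv_diff {d : ℕ} (x y : Fin d → ℝ) :
    fnorm (vecMulVec x x - vecMulVec y y) ≤ (vnorm x + vnorm y) * vnorm (x - y) := by
  rw [vmv_diff]
  calc fnorm (vecMulVec x (x - y) + vecMulVec (x - y) y)
      ≤ fnorm (vecMulVec x (x - y)) + fnorm (vecMulVec (x - y) y) := fnorm_triangle _ _
  _ = vnorm x * vnorm (x - y) + vnorm (x - y) * vnorm y := by
      rw [fnorm_vecMulVec, fnorm_vecMulVec]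
  _ = (vnorm x + vnorm y) * vnorm (x - y) := by ring
lemma final_arith (F D ε e ls lm α : ℝ) (hD0 : 0 ≤ D) (hε0 : 0 ≤ ε) (hεle : ε ≤ 1/6)
    (he0 : 0 ≤ e) (hls0 : 0 < ls)
    (h1 : |α - lm| ≤ (ls + 2*D)*ε^2) (h2 : |lm - ls| ≤ D)
    (h3 : |α| ≤ ls + D + (ls + 2*D)*ε^2)
    (hT : F ≤ D + (|α| * (2*ε) + (|α - lm| + (|lm - ls| + ls*(2*e))))) :
    F ≤ 3*D + 5*ls*ε + 2*ls*e := by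
  set t := (ls + 2*D)*ε^2 with htdef
  have ht0 : 0 ≤ t := mul_nonneg (by linarith) (sq_nonneg _)
  have hε2 : ε^2 ≤ ε/6 := by nlinarith
  have ht : t ≤ ls*ε/6 + D*ε/3 := by
    rw [htdef]
    nlinarith [mul_le_mul_of_nonneg_left hε2 (show (0:ℝ) ≤ ls + 2*D by linarith)]
  have ha0 : 0 ≤ |α| := abs_nonneg _
  have hεD : ε*D ≤ D/6 := by nlinarith
  have hεt : ε*t ≤ t/6 := by nlinarith
  have hεls : ε*ls ≤ ls/6 := by nlinarith
  have haε : |α| * ε ≤ ls*ε + D*ε + t*ε := by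
    nlinarith [mul_le_mul_of_nonneg_right h3 hε0]
  nlinarith [h1, h2, hT, haε, hεD, hεt, hεls, ht, ht0, mul_nonneg hls0.le hε0,
    mul_nonneg hD0 hε0]


set_option maxHeartbeats 1000000 in
/-- One-step propagation of the deflation error
(`Σ_k` is `S (k-1)` here, so the index is shifted by one). -/
theorem matrix_diff_propagate {d : ℕ}
    (Sig : Matrix (Fin d) (Fin d) ℝ) (hsym : Sig.IsSymm)
    (lamstar : ℕ → ℝ) (ustar : ℕ → Fin d → ℝ)
    (hlam1 : lamstar 0 = 1)
    (hdec : ∀ i j, i < j → j < d → lamstar j < lamstar i)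
    (hpos : ∀ j, j < d → 0 < lamstar j)
    (hunit : ∀ j, j < d → vnorm (ustar j) = 1)
    (hortho : ∀ i j, i < d → j < d → ustar i ⬝ᵥ ustar j = if i = j then 1 else 0)
    (heig : ∀ j, j < d → Sig.mulVec (ustar j) = lamstar j • ustar j)
    (S Sstar : ℕ → Matrix (Fin d) (Fin d) ℝ)
    (v u δ : ℕ → Fin d → ℝ)
    (hS0 : S 0 = Sig) (hSstar0 : Sstar 0 = Sig)
    (hSrec : ∀ k', S (k' + 1) =
      S k' - vecMulVec (v k') (v k') * S k' * vecMulVec (v k') (v k'))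
    (hSstarrec : ∀ k', k' < d →
      Sstar (k' + 1) = Sstar k' -
        vecMulVec (ustar k') (ustar k') * Sstar k' * vecMulVec (ustar k') (ustar k'))
    (hvdef : ∀ k', v k' = u k' + δ k')
    (hvunit : ∀ k', vnorm (v k') = 1)
    (lam : ℕ → ℝ)
    (hueig : ∀ k', (S k').mulVec (u k') = lam k' • u k')
    (huunit : ∀ k', vnorm (u k') = 1)
    (hutop : ∀ k', ∀ x : Fin d → ℝ, x ⬝ᵥ (S k').mulVec x ≤ lam k' * (x ⬝ᵥ x))
    (k : ℕ) (hk : k < d)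
    (hδ : vnorm (δ k) ≤ 1 / 6) :
    fnorm (S (k + 1) - Sstar (k + 1))
      ≤ 3 * fnorm (S k - Sstar k) + 5 * lamstar k * vnorm (δ k)
        + 2 * lamstar k * vnorm (u k - ustar k) := by
  -- notation
  set A := S k with hAdef
  set B := Sstar k with hBdef
  set vv := v k
  set uu := u k
  set us := ustar k
  set dd := δ k
  set lm := lam k with hlmdef
  set ls := lamstar k with hlsdef
  set ε := vnorm dd with hεdef
  set e := vnorm (uu - us) with hedef
  set D := fnorm (A - B) with hDdef
  have hε0 : 0 ≤ ε := vnorm_nonneg _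
  have he0 : 0 ≤ e := vnorm_nonneg _
  have hD0 : 0 ≤ D := fnorm_nonneg _
  have hls0 : 0 < ls := hpos k hk
  -- representation of Sstar
  have hcomp := complete_lemma ustar hortho
  have hSigrep : Sig = ∑ j ∈ Finset.range d, lamstar j • vecMulVec (ustar j) (ustar j) := by
    calc Sig = Sig * 1 := by rw [mul_one]
    _ = ∑ j ∈ Finset.range d, Sig * vecMulVec (ustar j) (ustar j) := by
        rw [← hcomp, Finset.mul_sum]
    _ = ∑ j ∈ Finset.range d, lamstar j • vecMulVec (ustar j) (ustar j) := by
        apply Finset.sum_congr rfl; intro j hj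
        rw [mul_vecMulVec, heig j (Finset.mem_range.mp hj), smul_vecMulVec]
  have hrep : ∀ m, m ≤ d →
      Sstar m = ∑ j ∈ Finset.Ico m d, lamstar j • vecMulVec (ustar j) (ustar j) := by
    intro m
    induction m with
    | zero =>
      intro _
      rw [hSstar0, hSigrep, Finset.range_eq_Ico]
    | succ n ih =>
      intro hnd
      have hn : n < d := hnd
      have hA := ih (le_of_lt hn)
      have key : ustar n ⬝ᵥ (Sstar n).mulVec (ustar n) = lamstar n := by
        rw [hA]
        have hmv : (∑ j ∈ Finset.Ico n d,
            lamstar j • vecMulVec (ustar j) (ustar j)).mulVec (ustar n)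
            = ∑ j ∈ Finset.Ico n d, (lamstar j * (ustar j ⬝ᵥ ustar n)) • ustar j := by
          rw [sum_mulVec']
          apply Finset.sum_congr rfl; intro j _
          rw [Matrix.smul_mulVec, _root_.vecMulVec_mulVec, smul_smul]
        rw [hmv, dot_sum']
        rw [Finset.sum_eq_single n]
        · rw [hortho n n hn hn, dotProduct_smul]
          simp [hortho n n hn hn, dotProduct_comm (ustar n)]
        · intro j hj hjn
          have hjd : j < d := (Finset.mem_Ico.mp hj).2
          rw [hortho j n hjd hn, if_neg hjn]
          simp
        · intro h; exact absurd (Finset.mem_Ico.mpr ⟨le_refl n, hn⟩) h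
      rw [hSstarrec n hn, deflate_eq, key, hA,
        Finset.sum_eq_sum_Ico_succ_bot hn (fun j => lamstar j • vecMulVec (ustar j) (ustar j))]
      abel
  have hBrep := hrep k (le_of_lt hk)
  -- Rayleigh quotient identity for Sstar k
  have hray : ∀ x : Fin d → ℝ,
      x ⬝ᵥ B.mulVec x = ∑ j ∈ Finset.Ico k d, lamstar j * (ustar j ⬝ᵥ x) ^ 2 := by
    intro x
    rw [hBdef, hBrep, sum_mulVec', dot_sum']
    apply Finset.sum_congr rfl; intro j _
    rw [Matrix.smul_mulVec, _root_.vecMulVec_mulVec, smul_smul, dotProduct_smul]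
    rw [dotProduct_comm x (ustar j)]
    ring_nf
  have hpsdB : ∀ x : Fin d → ℝ, 0 ≤ x ⬝ᵥ B.mulVec x := by
    intro x
    rw [hray x]
    apply Finset.sum_nonneg
    intro j hj
    exact mul_nonneg (hpos j (Finset.mem_Ico.mp hj).2).le (sq_nonneg _)
  have hrayB : ∀ x : Fin d → ℝ, x ⬝ᵥ B.mulVec x ≤ ls * (x ⬝ᵥ x) := by
    intro x
    rw [hray x]
    have h1 : ∑ j ∈ Finset.Ico k d, lamstar j * (ustar j ⬝ᵥ x) ^ 2
        ≤ ∑ j ∈ Finset.Ico k d, ls * (ustar j ⬝ᵥ x) ^ 2 := by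
      apply Finset.sum_le_sum
      intro j hj
      have hjm := Finset.mem_Ico.mp hj
      have : lamstar j ≤ ls := by
        rcases eq_or_lt_of_le hjm.1 with h | h
        · rw [← h]
        · exact (hdec k j h hjm.2).le
      exact mul_le_mul_of_nonneg_right this (sq_nonneg _)
    have h2 : ∑ j ∈ Finset.Ico k d, ls * (ustar j ⬝ᵥ x) ^ 2
        ≤ ∑ j ∈ Finset.range d, ls * (ustar j ⬝ᵥ x) ^ 2 := by
      apply Finset.sum_le_sum_of_subset_of_nonneg
      · rw [Finset.range_eq_Ico]
        exact Finset.Ico_subset_Ico (Nat.zero_le k) le_rfl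
      · intro j _ _
        exact mul_nonneg hls0.le (sq_nonneg _)
    have h3 : ∑ j ∈ Finset.range d, ls * (ustar j ⬝ᵥ x) ^ 2 = ls * (x ⬝ᵥ x) := by
      rw [← Finset.mul_sum]
      congr 1
      have : x ⬝ᵥ x = x ⬝ᵥ ((1 : Matrix (Fin d) (Fin d) ℝ).mulVec x) := by
        rw [Matrix.one_mulVec]
      rw [this, ← hcomp, sum_mulVec', dot_sum']
      apply Finset.sum_congr rfl; intro j _
      rw [_root_.vecMulVec_mulVec, dotProduct_smul, dotProduct_comm x (ustar j)]
      rw [smul_eq_mul, sq]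
    linarith
  -- eigen equation for Sstar k at ustar k
  have hBeig : B.mulVec us = ls • us := by
    rw [hBdef, hBrep, sum_mulVec']
    have : ∀ j ∈ Finset.Ico k d,
        (lamstar j • vecMulVec (ustar j) (ustar j)).mulVec us
          = (lamstar j * (ustar j ⬝ᵥ us)) • ustar j := by
      intro j _
      rw [Matrix.smul_mulVec, _root_.vecMulVec_mulVec, smul_smul]
    rw [Finset.sum_congr rfl this, Finset.sum_eq_single k]
    · rw [hortho k k hk hk, if_pos rfl, mul_one]
    · intro j hj hjk
      rw [hortho j k (Finset.mem_Ico.mp hj).2 hk, if_neg hjk, mul_zero, zero_smul]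
    · intro h; exact absurd (Finset.mem_Ico.mpr ⟨le_refl k, hk⟩) h
  -- symmetry of S m
  have hSsym : ∀ m, (S m)ᵀ = S m := by
    intro m
    induction m with
    | zero => rw [hS0]; exact hsym
    | succ n ih =>
      rw [hSrec n, Matrix.transpose_sub, Matrix.transpose_mul, Matrix.transpose_mul,
        _root_.transpose_vecMulVec, ih, Matrix.mul_assoc]
  -- symmetric dot product swap
  have hswap : ∀ x y : Fin d → ℝ, x ⬝ᵥ A.mulVec y = A.mulVec x ⬝ᵥ y := by
    intro x y
    rw [Matrix.dotProduct_mulVec, ← Matrix.mulVec_transpose, hSsym k]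
  -- unit norms as dot products
  have hvvdot : vv ⬝ᵥ vv = 1 := by rw [dot_self_eq, hvunit k]; norm_num
  have huudot : uu ⬝ᵥ uu = 1 := by rw [dot_self_eq, huunit k]; norm_num
  have husdot : us ⬝ᵥ us = 1 := by rw [dot_self_eq, hunit k hk]; norm_num
  have hdddot : dd ⬝ᵥ dd = ε ^ 2 := dot_self_eq dd
  have huunorm : vnorm uu = 1 := huunit k
  have husnorm : vnorm us = 1 := hunit k hk
  have hvvnorm : vnorm vv = 1 := hvunit k
  have hvu : vv = uu + dd := hvdef k
  -- quadratic form error bound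
  have hquad : ∀ x y : Fin d → ℝ, |x ⬝ᵥ (A - B).mulVec y| ≤ vnorm x * vnorm y * D := by
    intro x y
    rw [hDdef]
    exact abs_quad_le _ _ _
  -- Weyl-type bounds
  have hlmval : uu ⬝ᵥ A.mulVec uu = lm := by
    rw [hueig k, dotProduct_smul, smul_eq_mul, huudot, mul_one]
  have hlsval : us ⬝ᵥ B.mulVec us = ls := by
    rw [hBeig, dotProduct_smul, smul_eq_mul, husdot, mul_one]
  have hsubquad : ∀ x y : Fin d → ℝ,
      x ⬝ᵥ (A - B).mulVec y = x ⬝ᵥ A.mulVec y - x ⬝ᵥ B.mulVec y := by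
    intro x y
    rw [Matrix.sub_mulVec, dotProduct_sub]
  have hlmle : lm ≤ ls + D := by
    have h1 := hquad uu uu
    rw [hsubquad uu uu, hlmval] at h1
    have h2 := hrayB uu
    rw [huudot, mul_one] at h2
    rw [huunorm] at h1
    have := abs_le.mp h1
    linarith [this.2]
  have hlmge : ls - D ≤ lm := by
    have h1 := hquad us us
    rw [hsubquad us us, hlsval] at h1
    have h2 := hutop k us
    rw [husdot, mul_one] at h2
    rw [husnorm] at h1
    have := abs_le.mp h1
    change us ⬝ᵥ A.mulVec us ≤ lm at h2
    linarith [this.1]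
  -- alpha
  set α := vv ⬝ᵥ A.mulVec vv with hαdef
  have hαle : α ≤ lm := by
    have := hutop k vv
    rw [hvvdot, mul_one] at this
    exact this
  have hud : 2 * (uu ⬝ᵥ dd) = -(ε ^ 2) := by
    have : vv ⬝ᵥ vv = uu ⬝ᵥ uu + 2 * (uu ⬝ᵥ dd) + dd ⬝ᵥ dd := by
      rw [hvu, dotProduct_add, add_dotProduct, add_dotProduct, dotProduct_comm dd uu]
      ring
    rw [hvvdot, huudot, hdddot] at this
    linarith
  have hαexp : α = lm + 2 * lm * (uu ⬝ᵥ dd) + dd ⬝ᵥ A.mulVec dd := by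
    rw [hαdef, hvu]
    rw [Matrix.mulVec_add, dotProduct_add, add_dotProduct, add_dotProduct]
    rw [hueig k]
    have h1 : uu ⬝ᵥ A.mulVec dd = lm * (uu ⬝ᵥ dd) := by
      rw [hswap uu dd, hueig k, smul_dotProduct, smul_eq_mul]
    rw [h1]
    rw [dotProduct_smul, dotProduct_smul, smul_eq_mul, smul_eq_mul, huudot,
      dotProduct_comm dd uu]
    ring
  have hq1 : dd ⬝ᵥ A.mulVec dd ≤ lm * ε ^ 2 := by
    have := hutop k dd
    rwa [hdddot] at this
  have hq2 : -(D * ε ^ 2) ≤ dd ⬝ᵥ A.mulVec dd := by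
    have h1 := hquad dd dd
    rw [hsubquad dd dd] at h1
    have h2 := hpsdB dd
    have h3 := (abs_le.mp h1).1
    nlinarith [sq_nonneg ε]
  have hαlow : lm - (ls + 2 * D) * ε ^ 2 ≤ α := by
    have h1 : lm * ε ^ 2 ≤ (ls + D) * ε ^ 2 :=
      mul_le_mul_of_nonneg_right hlmle (sq_nonneg _)
    nlinarith [hud, hαexp, hq2]
  -- matrix identity
  set Vv := vecMulVec vv vv with hVv
  set Vuu := vecMulVec uu uu with hVuu
  set Vus := vecMulVec us us with hVus
  have hkey1 : S (k + 1) = A - α • Vv := by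
    rw [hSrec k, deflate_eq]
  have hkey2 : Sstar (k + 1) = B - ls • Vus := by
    rw [hSstarrec k hk, deflate_eq]
    have : us ⬝ᵥ B.mulVec us = ls := hlsval
    rw [this]
  have hid : S (k + 1) - Sstar (k + 1)
      = (A - B) + (-(α • (Vv - Vuu)) + (-((α - lm) • Vuu)
        + (-((lm - ls) • Vuu) + (-(ls • (Vuu - Vus)))))) := by
    rw [hkey1, hkey2]
    simp only [smul_sub, sub_smul]
    abel
  -- norm bounds for the pieces
  have hvvuu : vv - uu = dd := by rw [hvu, add_sub_cancel_left]
  have hn1 : fnorm (α • (Vv - Vuu)) ≤ |α| * (2 * ε) := by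
    rw [fnorm_smul]
    apply mul_le_mul_of_nonneg_left _ (abs_nonneg _)
    have := fnorm_vmv_diff vv uu
    rw [hvvnorm, huunorm, hvvuu] at this
    calc fnorm (Vv - Vuu) ≤ (1 + 1) * ε := this
    _ = 2 * ε := by ring
  have hfVuu : fnorm Vuu = 1 := by
    rw [hVuu, fnorm_vecMulVec, huunorm, mul_one]
  have hn2 : fnorm ((α - lm) • Vuu) = |α - lm| := by
    rw [fnorm_smul, hfVuu, mul_one]
  have hn3 : fnorm ((lm - ls) • Vuu) = |lm - ls| := by
    rw [fnorm_smul, hfVuu, mul_one]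
  have hn4 : fnorm (ls • (Vuu - Vus)) ≤ ls * (2 * e) := by
    rw [fnorm_smul]
    rw [abs_of_pos hls0]
    apply mul_le_mul_of_nonneg_left _ hls0.le
    have := fnorm_vmv_diff uu us
    rw [huunorm, husnorm] at this
    calc fnorm (Vuu - Vus) ≤ (1 + 1) * e := this
    _ = 2 * e := by ring
  -- triangle chain
  have hT : fnorm (S (k + 1) - Sstar (k + 1))
      ≤ D + (|α| * (2 * ε) + (|α - lm| + (|lm - ls| + ls * (2 * e)))) := by
    rw [hid]
    refine le_trans (fnorm_triangle _ _) ?_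
    apply add_le_add (le_of_eq hDdef.symm)
    refine le_trans (fnorm_triangle _ _) ?_
    apply add_le_add
    · rw [fnorm_neg]; exact hn1
    refine le_trans (fnorm_triangle _ _) ?_
    apply add_le_add
    · rw [fnorm_neg]; exact le_of_eq hn2
    refine le_trans (fnorm_triangle _ _) ?_
    apply add_le_add
    · rw [fnorm_neg]; exact le_of_eq hn3
    · rw [fnorm_neg]; exact hn4
  -- scalar bounds
  clear_value A B α D ε e lm ls Vv Vuu Vus vv uu us dd
  have hnn : 0 ≤ (ls + 2 * D) * ε ^ 2 := mul_nonneg (by linarith) (sq_nonneg _)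
  have habs1 : |α - lm| ≤ (ls + 2 * D) * ε ^ 2 := by
    rw [abs_le]
    exact ⟨by linarith [hαlow], by linarith [hαle]⟩
  have habs2 : |lm - ls| ≤ D := by
    rw [abs_le]; exact ⟨by linarith, by linarith⟩
  have habs3 : |α| ≤ ls + D + (ls + 2 * D) * ε ^ 2 := by
    rw [abs_le]
    exact ⟨by linarith [hαlow, hlmge], by linarith [hαle, hlmle]⟩
  exact final_arith _ D ε e ls lm α hD0 hε0 hδ he0 hls0 habs1 habs2 habs3 hT
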